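/- Fix a real number μ > 0 and define φ : [0, ∞) → ℝ by φ(x) = (e^{−x} − e^{−μ} + (x − μ)e^{−μ})/(x − μ)² for x ≠ μ and φ(μ) = (1/2)e^{−μ}. Then the supremum of φ over [0, ∞) is attained at x = 0 and equals (1 − e^{−μ} − μe^{−μ})/μ². -/

import Mathlib

noncomputable def Hstmt7 (t : ℝ) : ℝ := ∫ u in (0:ℝ)..1, (1 - u) * Real.exp (-(t * u))

lemma Hstmt7_integrable (t a b : ℝ) :
    IntervalIntegrable (fun u => (1 - u) * Real.exp (-(t * u))) MeasureTheory.volume a b := by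
  apply Continuous.intervalIntegrable
  continuity

lemma Hstmt7_eval (t : ℝ) (ht : t ≠ 0) :
    Hstmt7 t = (Real.exp (-t) - 1 + t) / t ^ 2 := by
  have key : ∀ u ∈ Set.uIcc (0:ℝ) 1,
      HasDerivAt (fun u : ℝ => ((1 - t) / t ^ 2 + u / t) * Real.exp (-(t * u)))
        ((1 - u) * Real.exp (-(t * u))) u := by
    intro u _
    have h1 : HasDerivAt (fun u : ℝ => (1 - t) / t ^ 2 + u / t) (1 / t) u := by
      simpa using ((hasDerivAt_id u).div_const t).const_add ((1 - t) / t ^ 2)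
    have h2 : HasDerivAt (fun u : ℝ => Real.exp (-(t * u))) (-t * Real.exp (-(t * u))) u := by
      have : HasDerivAt (fun u : ℝ => -(t * u)) (-t) u := by
        exact (((hasDerivAt_id u).const_mul t).neg).congr_deriv (by ring)
      refine ((Real.hasDerivAt_exp (-(t * u))).comp u this).congr_deriv ?_
      ring
    have := h1.mul h2
    refine this.congr_deriv ?_
    field_simp
    ring
  have := intervalIntegral.integral_eq_sub_of_hasDerivAt key (Hstmt7_integrable t 0 1)
  rw [Hstmt7, this]
  field_simp
  simp only [mul_zero, mul_one, neg_zero, Real.exp_zero]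
  ring

lemma Hstmt7_zero : Hstmt7 0 = 1 / 2 := by
  have : Hstmt7 0 = ∫ u in (0:ℝ)..1, (1 - u) := by
    unfold Hstmt7
    congr 1
    ext u
    simp
  rw [this]
  have h1 : IntervalIntegrable (fun _ : ℝ => (1:ℝ)) MeasureTheory.volume 0 1 :=
    intervalIntegrable_const
  have h2 : IntervalIntegrable (fun u : ℝ => u) MeasureTheory.volume 0 1 :=
    intervalIntegral.intervalIntegrable_id
  rw [intervalIntegral.integral_sub h1 h2]
  simp
  norm_num

lemma Hstmt7_mono {s t : ℝ} (hst : s ≤ t) : Hstmt7 t ≤ Hstmt7 s := by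
  apply intervalIntegral.integral_mono_on (by norm_num) (Hstmt7_integrable t 0 1)
    (Hstmt7_integrable s 0 1)
  intro u hu
  have hu0 : 0 ≤ u := hu.1
  have hu1 : u ≤ 1 := hu.2
  have h1 : (0:ℝ) ≤ 1 - u := by linarith
  have h2 : Real.exp (-(t * u)) ≤ Real.exp (-(s * u)) := by
    apply Real.exp_le_exp.2
    nlinarith
  exact mul_le_mul_of_nonneg_left h2 h1

theorem stmt_7 (μ : ℝ) (hμ : 0 < μ)
    (φ : ℝ → ℝ)
    (hφ : ∀ x, φ x = if x = μ then (1/2) * Real.exp (-μ)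
      else (Real.exp (-x) - Real.exp (-μ) + (x - μ) * Real.exp (-μ)) / (x - μ)^2) :
    φ 0 = (1 - Real.exp (-μ) - μ * Real.exp (-μ)) / μ^2 ∧
      IsGreatest (φ '' Set.Ici 0) ((1 - Real.exp (-μ) - μ * Real.exp (-μ)) / μ^2) := by
  have hμ0 : (0:ℝ) ≠ μ := ne_of_lt hμ
  have hφ0 : φ 0 = (1 - Real.exp (-μ) - μ * Real.exp (-μ)) / μ^2 := by
    rw [hφ 0, if_neg hμ0]
    rw [neg_zero, Real.exp_zero]
    ring_nf
  -- key representation: φ x = exp(-μ) * Hstmt7 (x - μ)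
  have hrep : ∀ x : ℝ, φ x = Real.exp (-μ) * Hstmt7 (x - μ) := by
    intro x
    by_cases hx : x = μ
    · rw [hφ x, if_pos hx, hx, sub_self, Hstmt7_zero]
      ring
    · rw [hφ x, if_neg hx, Hstmt7_eval (x - μ) (sub_ne_zero.2 hx)]
      have hex : Real.exp (-x) = Real.exp (-(x - μ)) * Real.exp (-μ) := by
        rw [← Real.exp_add]; ring_nf
      rw [hex]
      have h2 : (x - μ) ^ 2 ≠ 0 := pow_ne_zero 2 (sub_ne_zero.2 hx)
      field_simp
  constructor
  · exact hφ0
  constructor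
  · exact ⟨0, Set.self_mem_Ici, hφ0⟩
  · rintro y ⟨x, hx, rfl⟩
    rw [← hφ0, hrep x, hrep 0]
    have : Hstmt7 (x - μ) ≤ Hstmt7 (0 - μ) := Hstmt7_mono (by linarith [Set.mem_Ici.1 hx])
    exact mul_le_mul_of_nonneg_left this (Real.exp_pos _).le
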